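/- Let (W,S) be a Coxeter system with positive root system Π, and define θ(x) = Π ∩ x^{-1}(−Π) for x ∈ W. Then for all x, y ∈ W, the symmetric difference θ(x) △ θ(y) has cardinality ℓ(yx^{-1}), the Coxeter length of yx^{-1}. In particular, x ↦ θ(x) is an isometric embedding of the Cayley graph of (W,S) into the hypercube Q_Π, and consequently for every q ∈ [−1,1] the matrix (q^{ℓ(yx^{-1})})_{x,y∈W} is positive semidefinite. -/

import Mathlib

open scoped ComplexOrder

open Finset in
private lemma psd_core19 {ι W : Type*} [DecidableEq ι] (U : Finset ι) (s : Finset W)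
    (A : W → Finset ι) (hA : ∀ x ∈ s, A x ⊆ U) (q : ℝ) (hq : q ∈ Set.Icc (-1:ℝ) 1)
    (f : W → ℂ) :
    0 ≤ ∑ x ∈ s, ∑ y ∈ s, (starRingEnd ℂ) (f x) * f y *
      (q : ℂ) ^ (symmDiff (A x) (A y)).card := by
  set χ : Finset ι → W → ℂ := fun T x => ∏ α ∈ T, (if α ∈ A x then (-1:ℂ) else 1) with hχ
  set w : Finset ι → ℂ := fun T =>
    (∏ _α ∈ T, (((1-q)/2 : ℝ) : ℂ)) * ∏ _α ∈ U \ T, (((1+q)/2 : ℝ) : ℂ) with hw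
  have hconj : ∀ T x, (starRingEnd ℂ) (χ T x) = χ T x := by
    intro T x
    rw [hχ, map_prod]
    refine Finset.prod_congr rfl fun α _ => ?_
    by_cases h : α ∈ A x <;> simp [h]
  have key : ∀ x ∈ s, ∀ y ∈ s,
      ∑ T ∈ U.powerset, w T * (χ T x * χ T y) = (q : ℂ) ^ (symmDiff (A x) (A y)).card := by
    intro x hx y hy
    have hchi : ∀ T, χ T x * χ T y
        = ∏ α ∈ T, (if α ∈ symmDiff (A x) (A y) then (-1:ℂ) else 1) := by
      intro T
      rw [hχ]
      simp only [← Finset.prod_mul_distrib]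
      refine Finset.prod_congr rfl fun α _ => ?_
      by_cases h1 : α ∈ A x <;> by_cases h2 : α ∈ A y <;>
        simp [h1, h2, Finset.mem_symmDiff]
    calc ∑ T ∈ U.powerset, w T * (χ T x * χ T y)
        = ∑ T ∈ U.powerset,
            (∏ α ∈ T, ((((1-q)/2 : ℝ) : ℂ) * (if α ∈ symmDiff (A x) (A y) then (-1:ℂ) else 1)))
            * ∏ α ∈ U \ T, (((1+q)/2 : ℝ) : ℂ) := by
          refine Finset.sum_congr rfl fun T _ => ?_
          rw [hchi, hw, Finset.prod_mul_distrib]; ring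
      _ = ∏ α ∈ U, ((((1-q)/2 : ℝ) : ℂ) * (if α ∈ symmDiff (A x) (A y) then (-1:ℂ) else 1)
            + (((1+q)/2 : ℝ) : ℂ)) := (Finset.prod_add _ _ U).symm
      _ = ∏ α ∈ U, (if α ∈ symmDiff (A x) (A y) then (q:ℂ) else 1) := by
          refine Finset.prod_congr rfl fun α _ => ?_
          by_cases h : α ∈ symmDiff (A x) (A y) <;> simp [h] <;> ring
      _ = ∏ α ∈ U ∩ symmDiff (A x) (A y), (q:ℂ) := Finset.prod_ite_mem _ _ _
      _ = (q:ℂ) ^ (symmDiff (A x) (A y)).card := by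
          rw [Finset.prod_const]
          congr 1
          rw [Finset.inter_eq_right.2]
          exact le_trans symmDiff_le_sup (Finset.union_subset (hA x hx) (hA y hy))
  have hfac : ∀ T, w T * ((starRingEnd ℂ) (∑ x ∈ s, f x * χ T x) * (∑ y ∈ s, f y * χ T y))
      = ∑ x ∈ s, ∑ y ∈ s, (starRingEnd ℂ) (f x) * f y * (w T * (χ T x * χ T y)) := by
    intro T
    rw [map_sum, Finset.sum_mul_sum, Finset.mul_sum]
    refine Finset.sum_congr rfl fun x _ => ?_
    rw [Finset.mul_sum]
    refine Finset.sum_congr rfl fun y _ => ?_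
    rw [map_mul, hconj T x]
    ring
  calc (0:ℂ) ≤ ∑ T ∈ U.powerset,
        w T * ((starRingEnd ℂ) (∑ x ∈ s, f x * χ T x) * (∑ y ∈ s, f y * χ T y)) := by
        refine Finset.sum_nonneg fun T _ => ?_
        have h1 : 0 ≤ w T := by
          rw [hw]
          dsimp only
          rw [Finset.prod_const, Finset.prod_const, ← Complex.ofReal_pow,
            ← Complex.ofReal_pow, ← Complex.ofReal_mul, Complex.zero_le_real]
          obtain ⟨ha, hb⟩ := hq
          have h1 : (0:ℝ) ≤ (1-q)/2 := by linarith
          have h2 : (0:ℝ) ≤ (1+q)/2 := by linarith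
          exact mul_nonneg (pow_nonneg h1 _) (pow_nonneg h2 _)
        have h2 : 0 ≤ (starRingEnd ℂ) (∑ x ∈ s, f x * χ T x) * (∑ y ∈ s, f y * χ T y) := by
          rw [Complex.conj_mul', ← Complex.ofReal_pow, Complex.zero_le_real]
          positivity
        exact mul_nonneg h1 h2
    _ = ∑ T ∈ U.powerset, ∑ x ∈ s, ∑ y ∈ s,
          (starRingEnd ℂ) (f x) * f y * (w T * (χ T x * χ T y)) :=
        Finset.sum_congr rfl fun T _ => hfac T
    _ = ∑ x ∈ s, ∑ y ∈ s, ∑ T ∈ U.powerset,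
          (starRingEnd ℂ) (f x) * f y * (w T * (χ T x * χ T y)) := by
        rw [Finset.sum_comm]
        exact Finset.sum_congr rfl fun x _ => Finset.sum_comm
    _ = ∑ x ∈ s, ∑ y ∈ s, (starRingEnd ℂ) (f x) * f y *
          (q : ℂ) ^ (symmDiff (A x) (A y)).card := by
        refine Finset.sum_congr rfl fun x hx => Finset.sum_congr rfl fun y hy => ?_
        rw [← Finset.mul_sum, key x hx y hy]

private lemma geom_key19 {W : Type*} [Group W] {V : Type*} [AddCommGroup V] [Module ℝ V]
    (ρ : W →* (V ≃ₗ[ℝ] V)) (Pos : Set V)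
    (hdisj : Disjoint Pos (-Pos))
    (hinv : ∀ w : W, (ρ w) '' (Pos ∪ -Pos) = Pos ∪ -Pos)
    (hfin : ∀ x : W, (Pos ∩ (ρ x) ⁻¹' (-Pos)).Finite) (x y : W) :
    (symmDiff (Pos ∩ (ρ x) ⁻¹' (-Pos)) (Pos ∩ (ρ y) ⁻¹' (-Pos))).ncard =
      (Pos ∩ (ρ (y * x⁻¹)) ⁻¹' (-Pos)).ncard := by
  set θ : W → Set V := fun z => Pos ∩ (ρ z) ⁻¹' (-Pos) with hθ
  have hmem : ∀ (w : W) (v : V), v ∈ Pos ∪ -Pos → ρ w v ∈ Pos ∪ -Pos := by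
    intro w v hv
    rw [← hinv w]
    exact ⟨v, hv, rfl⟩
  have hcomp : ∀ v : V, ρ (y * x⁻¹) (ρ x v) = ρ y v := by
    intro v
    have h : ρ (y * x⁻¹) * ρ x = ρ y := by rw [← map_mul, inv_mul_cancel_right]
    calc ρ (y * x⁻¹) (ρ x v) = (ρ (y * x⁻¹) * ρ x) v := rfl
      _ = ρ y v := by rw [h]
  have hnotboth : ∀ v : V, v ∈ Pos → v ∉ -Pos := fun v hv =>
    Set.disjoint_left.mp hdisj hv
  have hset : θ (y * x⁻¹) = (ρ x) '' (θ y \ θ x) ∪ (fun v => -(ρ x v)) '' (θ x \ θ y) := by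
    ext β
    constructor
    · rintro ⟨hβPos, hβneg⟩
      have hv : (ρ x⁻¹) β ∈ Pos ∪ -Pos := hmem x⁻¹ β (Or.inl hβPos)
      have hxv : ρ x ((ρ x⁻¹) β) = β := by
        calc ρ x ((ρ x⁻¹) β) = (ρ x * ρ x⁻¹) β := rfl
          _ = β := by rw [← map_mul, mul_inv_cancel, map_one]; rfl
      have hβneg' : ρ (y * x⁻¹) β ∈ -Pos := hβneg
      rcases hv with hv | hv
      · left
        refine ⟨(ρ x⁻¹) β, ⟨⟨hv, ?_⟩, fun h => ?_⟩, hxv⟩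
        · show ρ y ((ρ x⁻¹) β) ∈ -Pos
          rw [← hcomp, hxv]; exact hβneg'
        · exact hnotboth β hβPos (hxv ▸ h.2)
      · right
        refine ⟨-((ρ x⁻¹) β), ⟨⟨?_, ?_⟩, fun h => ?_⟩, by show -(ρ x (-((ρ x⁻¹) β))) = β; rw [map_neg, hxv, neg_neg]⟩
        · exact Set.mem_neg.mp hv
        · show ρ x (-((ρ x⁻¹) β)) ∈ -Pos
          rw [map_neg, hxv, Set.mem_neg, neg_neg]; exact hβPos
        · have h2 : ρ y (-((ρ x⁻¹) β)) ∈ -Pos := h.2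
          rw [map_neg, ← hcomp, hxv, Set.mem_neg, neg_neg] at h2
          exact hnotboth _ h2 hβneg'
    · rintro (⟨v, ⟨⟨hvP, hvy⟩, hvx⟩, rfl⟩ | ⟨v, ⟨⟨hvP, hvx⟩, hvy⟩, rfl⟩)
      · have hρx : ρ x v ∈ Pos := by
          rcases hmem x v (Or.inl hvP) with h | h
          · exact h
          · exact absurd h (fun h => hvx ⟨hvP, h⟩)
        exact ⟨hρx, by rw [Set.mem_preimage, hcomp]; exact hvy⟩
      · have hρy : ρ y v ∈ Pos := by
          rcases hmem y v (Or.inl hvP) with h | h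
          · exact h
          · exact absurd h (fun h => hvy ⟨hvP, h⟩)
        refine ⟨show -(ρ x v) ∈ Pos from Set.mem_neg.mp hvx, ?_⟩
        rw [Set.mem_preimage, map_neg, hcomp, Set.mem_neg, neg_neg]
        exact hρy
  have hfx : (θ x).Finite := hfin x
  have hfy : (θ y).Finite := hfin y
  have hinj1 : Function.Injective (ρ x : V → V) := (ρ x).injective
  have hinj2 : Function.Injective (fun v : V => -(ρ x v)) :=
    neg_injective.comp (ρ x).injective
  have hdisjim : Disjoint ((ρ x) '' (θ y \ θ x)) ((fun v => -(ρ x v)) '' (θ x \ θ y)) := by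
    rw [Set.disjoint_left]
    rintro β ⟨a, ha, rfl⟩ ⟨b, hb, hba⟩
    have hab : a = -b := by
      have := hinj1 (show ρ x a = ρ x (-b) by rw [map_neg, ← hba])
      exact this
    have haP : a ∈ Pos := ha.1.1
    have hbP : b ∈ Pos := hb.1.1
    have hbneg : -b ∈ Pos := by rw [← hab]; exact haP
    exact hnotboth b hbP (Set.mem_neg.mpr hbneg)
  calc (symmDiff (θ x) (θ y)).ncard
      = ((θ x \ θ y) ∪ (θ y \ θ x)).ncard := by rw [Set.symmDiff_def]
    _ = (θ x \ θ y).ncard + (θ y \ θ x).ncard :=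
        Set.ncard_union_eq disjoint_sdiff_sdiff (hfx.diff) (hfy.diff)
    _ = (θ (y * x⁻¹)).ncard := by
        rw [hset, Set.ncard_union_eq hdisjim ((hfy.diff).image _) ((hfx.diff).image _),
          Set.ncard_image_of_injective _ hinj1, Set.ncard_image_of_injective _ hinj2,
          add_comm]

theorem stmt19 {B W : Type*} [Group W] {M : CoxeterMatrix B} (cs : CoxeterSystem M W)
    {V : Type*} [AddCommGroup V] [Module ℝ V]
    (ρ : W →* (V ≃ₗ[ℝ] V)) (Pos : Set V)
    (hdisj : Disjoint Pos (-Pos))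
    (hinv : ∀ w : W, (ρ w) '' (Pos ∪ -Pos) = Pos ∪ -Pos)
    (hfin : ∀ x : W, (Pos ∩ (ρ x) ⁻¹' (-Pos)).Finite)
    (hlen : ∀ x : W, cs.length x = (Pos ∩ (ρ x) ⁻¹' (-Pos)).ncard) :
    (∀ x y : W,
      (symmDiff (Pos ∩ (ρ x) ⁻¹' (-Pos)) (Pos ∩ (ρ y) ⁻¹' (-Pos))).ncard =
        cs.length (y * x⁻¹)) ∧
    ∀ q ∈ Set.Icc (-1 : ℝ) 1, ∀ f : W →₀ ℂ,
      0 ≤ ∑ x ∈ f.support, ∑ y ∈ f.support,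
        (starRingEnd ℂ) (f x) * f y * (q : ℂ) ^ cs.length (y * x⁻¹) := by
  classical
  have key : ∀ x y : W,
      (symmDiff (Pos ∩ (ρ x) ⁻¹' (-Pos)) (Pos ∩ (ρ y) ⁻¹' (-Pos))).ncard =
        cs.length (y * x⁻¹) := by
    intro x y
    rw [geom_key19 ρ Pos hdisj hinv hfin x y, hlen]
  refine ⟨key, ?_⟩
  intro q hq f
  set A : W → Finset V := fun z => (hfin z).toFinset with hA
  have hcard : ∀ x y : W, (symmDiff (A x) (A y)).card = cs.length (y * x⁻¹) := by
    intro x y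
    rw [← key x y]
    have hcoe : (↑(symmDiff (A x) (A y)) : Set V)
        = symmDiff (Pos ∩ (ρ x) ⁻¹' (-Pos)) (Pos ∩ (ρ y) ⁻¹' (-Pos)) := by
      ext v
      simp [hA, Finset.mem_symmDiff, Set.mem_symmDiff, Set.Finite.mem_toFinset]
    rw [← hcoe, Set.ncard_coe_finset]
  have := psd_core19 (f.support.biUnion A) f.support A
    (fun x hx => Finset.subset_biUnion_of_mem A hx) q hq f
  calc (0:ℂ) ≤ ∑ x ∈ f.support, ∑ y ∈ f.support, (starRingEnd ℂ) (f x) * f y *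
        (q : ℂ) ^ (symmDiff (A x) (A y)).card := this
    _ = ∑ x ∈ f.support, ∑ y ∈ f.support,
        (starRingEnd ℂ) (f x) * f y * (q : ℂ) ^ cs.length (y * x⁻¹) := by
      refine Finset.sum_congr rfl fun x _ => Finset.sum_congr rfl fun y _ => ?_
      rw [hcard x y]
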